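/- Let β ∈ (0,1) and let T be a rooted tree on t+1 vertices. Then there exists a set S ⊆ V(T) containing the root, with |S| < 1/β + 2, such that every connected component of T − S has at most β·t vertices. -/

import Mathlib

set_option linter.unusedSectionVars false

namespace SeedDecomp

open SimpleGraph Walk

variable {V : Type*} [DecidableEq V] {T : SimpleGraph V} {r : V}

/-- The "subtree" below `v`: vertices whose (unique) path from the root passes through `v`. -/
def D (p : ∀ u : V, T.Walk r u) (v : V) : Set V := {u | v ∈ (p u).support}

lemma mem_D_self (p : ∀ u : V, T.Walk r u) (v : V) : v ∈ D p v :=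
  Walk.end_mem_support _

lemma mem_D_root (p : ∀ u : V, T.Walk r u) (u : V) : u ∈ D p r :=
  Walk.start_mem_support _

lemma path_subset_walk (p : ∀ u : V, T.Walk r u)
    (hu : ∀ u (q : T.Walk r u), q.IsPath → q = p u)
    (u : V) (w : T.Walk r u) : (p u).support ⊆ w.support := by
  have h : w.bypass = p u := hu u w.bypass w.bypass_isPath
  rw [← h]
  exact w.support_bypass_subset

lemma takeUntil_eq (p : ∀ u : V, T.Walk r u)
    (hp : ∀ u, (p u).IsPath) (hu : ∀ u (q : T.Walk r u), q.IsPath → q = p u)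
    {u v : V} (h : v ∈ (p u).support) : (p u).takeUntil v h = p v :=
  hu v _ ((hp u).takeUntil h)

lemma take_drop_disjoint {u : V} (w : T.Walk r u) (hw : w.IsPath) {v : V}
    (h : v ∈ w.support) {x : V} (hx : x ∈ (w.takeUntil v h).support)
    (hx' : x ∈ ((w.dropUntil v h).support).tail) : False := by
  have h2 : (((w.takeUntil v h).append (w.dropUntil v h)).support).Nodup := by
    rw [Walk.take_spec]
    exact hw.support_nodup
  rw [Walk.support_append] at h2
  exact (List.disjoint_of_nodup_append h2) hx hx'

lemma D_trans (p : ∀ u : V, T.Walk r u)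
    (hp : ∀ u, (p u).IsPath) (hu : ∀ u (q : T.Walk r u), q.IsPath → q = p u)
    {u c v : V} (h1 : u ∈ D p c) (h2 : c ∈ D p v) : u ∈ D p v := by
  have h1' : c ∈ (p u).support := h1
  have h2' : v ∈ (p c).support := h2
  rw [← takeUntil_eq p hp hu h1'] at h2'
  exact Walk.support_takeUntil_subset _ _ h2'

lemma D_antisymm (p : ∀ u : V, T.Walk r u)
    (hp : ∀ u, (p u).IsPath) (hu : ∀ u (q : T.Walk r u), q.IsPath → q = p u)
    {u v : V} (h1 : u ∈ D p v) (h2 : v ∈ D p u) : u = v := by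
  by_contra hne
  have hv : v ∈ (p u).support := h1
  have hu2 : u ∈ ((p u).takeUntil v hv).support := by
    rw [takeUntil_eq p hp hu hv]; exact h2
  have hend : u ∈ ((p u).dropUntil v hv).support.tail := by
    have h3 := Walk.end_mem_support ((p u).dropUntil v hv)
    rw [Walk.support_eq_cons] at h3
    rcases List.mem_cons.mp h3 with h3 | h3
    · exact absurd h3 hne
    · exact h3
  exact take_drop_disjoint (p u) (hp u) hv hu2 hend

lemma adj_mem_D (p : ∀ u : V, T.Walk r u)
    (hu : ∀ u (q : T.Walk r u), q.IsPath → q = p u)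
    {u v x : V} (h1 : u ∈ D p v) (hadj : T.Adj x u) (h2 : x ∉ D p v) : u = v := by
  by_contra hne
  have hw : v ∈ ((p x).concat hadj).support :=
    path_subset_walk p hu u _ h1
  rw [Walk.support_concat] at hw
  rw [List.mem_append, List.mem_singleton] at hw
  rcases hw with hw | hw
  · exact h2 hw
  · exact hne hw.symm

lemma adj_dichotomy (p : ∀ u : V, T.Walk r u)
    (hp : ∀ u, (p u).IsPath) (hu : ∀ u (q : T.Walk r u), q.IsPath → q = p u)
    {a b : V} (h : T.Adj a b) : a ∈ D p b ∨ b ∈ D p a := by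
  by_contra hc
  push_neg at hc
  obtain ⟨h1, h2⟩ := hc
  have h1' : b ∉ (p a).support := h1
  have h2' : a ∉ (p b).support := h2
  have hpath : ((p b).concat h.symm).IsPath := by
    rw [Walk.isPath_def, Walk.support_concat]
    rw [List.nodup_append]
    refine ⟨(hp b).support_nodup, List.nodup_singleton a, ?_⟩
    intro x hx y hx' hxy
    rw [List.mem_singleton] at hx'
    subst hx'
    exact h2' (hxy ▸ hx)
  have heq : (p b).concat h.symm = p a := hu a _ hpath
  apply h1'
  rw [← heq]
  rw [Walk.support_concat, List.mem_append]
  exact Or.inl (Walk.end_mem_support _)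

lemma D_comparable (p : ∀ u : V, T.Walk r u)
    (hp : ∀ u, (p u).IsPath) (hu : ∀ u (q : T.Walk r u), q.IsPath → q = p u)
    {u x y : V} (hx : x ∈ (p u).support) (hy : y ∈ (p u).support) :
    y ∈ D p x ∨ x ∈ D p y := by
  by_cases hxy : x ∈ ((p u).takeUntil y hy).support
  · left
    show x ∈ (p y).support
    rw [← takeUntil_eq p hp hu hy]
    exact hxy
  · right
    have hx' : x ∈ ((p u).dropUntil y hy).support := by
      have h := hx
      rw [← Walk.take_spec (p u) hy, Walk.mem_support_append_iff] at h
      tauto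
    set q1 := (p u).takeUntil y hy with hq1
    set q2 := (p u).dropUntil y hy with hq2
    set w := q1.append (q2.takeUntil x hx') with hwdef
    have hsub : w.support.Sublist (p u).support := by
      conv_rhs => rw [← Walk.take_spec (p u) hy]
      rw [hwdef, Walk.support_append, Walk.support_append, ← hq1, ← hq2]
      apply List.Sublist.append_left
      have : q2.support.tail
          = (q2.takeUntil x hx').support.tail ++ (q2.dropUntil x hx').support.tail := by
        conv_lhs => rw [← Walk.take_spec q2 hx']
        rw [Walk.support_append, List.tail_append_of_ne_nil (Walk.support_ne_nil _)]
      rw [this]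
      exact List.sublist_append_left _ _
    have hwpath : w.IsPath := by
      rw [Walk.isPath_def]
      exact (hp u).support_nodup.sublist hsub
    have heq : w = p x := hu x w hwpath
    show y ∈ (p x).support
    rw [← heq, hwdef, Walk.mem_support_append_iff]
    exact Or.inl (Walk.end_mem_support _)


lemma exists_snd {a b : V} (w : T.Walk a b) (h : a ≠ b) :
    ∃ c, T.Adj a c ∧ c ∈ w.support.tail := by
  cases w with
  | nil => exact absurd rfl h
  | cons h' q => exact ⟨_, h', by simp [Walk.start_mem_support]⟩

lemma exists_child (p : ∀ u : V, T.Walk r u)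
    (hp : ∀ u, (p u).IsPath) (hu : ∀ u (q : T.Walk r u), q.IsPath → q = p u)
    {u v : V} (huv : u ∈ D p v) (hne : u ≠ v) :
    ∃ c, T.Adj v c ∧ c ∈ D p v ∧ u ∈ D p c := by
  have hv : v ∈ (p u).support := huv
  obtain ⟨c, hadj, hctail⟩ := exists_snd ((p u).dropUntil v hv) (Ne.symm hne)
  have hcsup : c ∈ (p u).support :=
    Walk.support_dropUntil_subset (p u) hv (List.mem_of_mem_tail hctail)
  have hcDu : u ∈ D p c := hcsup
  rcases D_comparable p hp hu hcsup hv with h | h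
  · -- h : v ∈ D p c, i.e. c ∈ (p v).support : contradiction
    exfalso
    have hcv : c ∈ (p v).support := h
    rw [← takeUntil_eq p hp hu hv] at hcv
    exact take_drop_disjoint (p u) (hp u) hv hcv hctail
  · exact ⟨c, hadj, h, hcDu⟩

lemma walk_through (p : ∀ u : V, T.Walk r u)
    (hu : ∀ u (q : T.Walk r u), q.IsPath → q = p u)
    {v u c : V} (hvc : v ∉ D p c) (huc : u ∈ D p c) (w : T.Walk v u) :
    c ∈ w.support := by
  by_contra hcw
  have h1 : c ∈ ((p v).append w).support :=
    path_subset_walk p hu u _ huc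
  rw [Walk.mem_support_append_iff] at h1
  rcases h1 with h1 | h1
  · exact hvc h1
  · exact hcw h1

lemma not_root_mem_D_of_adj (p : ∀ u : V, T.Walk r u)
    (hp : ∀ u, (p u).IsPath) (hu : ∀ u (q : T.Walk r u), q.IsPath → q = p u)
    {v c : V} (hadj : T.Adj v c) (hcD : c ∈ D p v) : v ∉ D p c := fun hv =>
  hadj.ne (D_antisymm p hp hu hv hcD)

lemma D_disjoint_children (p : ∀ u : V, T.Walk r u)
    (hp : ∀ u, (p u).IsPath) (hu : ∀ u (q : T.Walk r u), q.IsPath → q = p u)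
    {v c c' : V} (hc : T.Adj v c) (hc' : T.Adj v c')
    (hcD : c ∈ D p v) (hc'D : c' ∈ D p v) (hne : c ≠ c')
    {u : V} (h1 : u ∈ D p c) (h2 : u ∈ D p c') : False := by
  have h1' : c ∈ (p u).support := h1
  have h2' : c' ∈ (p u).support := h2
  rcases D_comparable p hp hu h1' h2' with h | h
  · -- h : c' ∈ D p c
    exact hne.symm (adj_mem_D p hu h hc' (not_root_mem_D_of_adj p hp hu hc hcD))
  · -- h : c ∈ D p c'
    exact hne (adj_mem_D p hu h hc (not_root_mem_D_of_adj p hp hu hc' hc'D))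

section fin

variable [Fintype V]

/-- `D p v` as a finset. -/
noncomputable def Dfin (p : ∀ u : V, T.Walk r u) (v : V) : Finset V :=
  (Set.toFinite (D p v)).toFinset

lemma mem_Dfin {p : ∀ u : V, T.Walk r u} {v u : V} : u ∈ Dfin p v ↔ u ∈ D p v :=
  Set.Finite.mem_toFinset _

/-- children of `v` as a finset. -/
noncomputable def childFin (p : ∀ u : V, T.Walk r u) (v : V) : Finset V :=
  (Set.toFinite {c | T.Adj v c ∧ c ∈ D p v}).toFinset

lemma mem_childFin {p : ∀ u : V, T.Walk r u} {v c : V} :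
    c ∈ childFin p v ↔ T.Adj v c ∧ c ∈ D p v :=
  Set.Finite.mem_toFinset _

lemma Dfin_eq_insert (p : ∀ u : V, T.Walk r u)
    (hp : ∀ u, (p u).IsPath) (hu : ∀ u (q : T.Walk r u), q.IsPath → q = p u)
    (v : V) : Dfin p v = insert v ((childFin p v).biUnion (Dfin p)) := by
  ext u
  rw [mem_Dfin, Finset.mem_insert, Finset.mem_biUnion]
  constructor
  · intro h
    by_cases hne : u = v
    · exact Or.inl hne
    · obtain ⟨c, hadj, hcD, huc⟩ := exists_child p hp hu h hne
      exact Or.inr ⟨c, mem_childFin.mpr ⟨hadj, hcD⟩, mem_Dfin.mpr huc⟩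
  · rintro (rfl | ⟨c, hc, huc⟩)
    · exact mem_D_self p u
    · obtain ⟨hadj, hcD⟩ := mem_childFin.mp hc
      exact D_trans p hp hu (mem_Dfin.mp huc) hcD

lemma card_Dfin (p : ∀ u : V, T.Walk r u)
    (hp : ∀ u, (p u).IsPath) (hu : ∀ u (q : T.Walk r u), q.IsPath → q = p u)
    (v : V) : (Dfin p v).card = 1 + ∑ c ∈ childFin p v, (Dfin p c).card := by
  rw [Dfin_eq_insert p hp hu v, Finset.card_insert_of_notMem, Finset.card_biUnion, add_comm]
  · intro c hc c' hc' hne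
    obtain ⟨hadj, hcD⟩ := mem_childFin.mp hc
    obtain ⟨hadj', hc'D⟩ := mem_childFin.mp hc'
    rw [Function.onFun, Finset.disjoint_left]
    intro u hu1 hu2
    exact D_disjoint_children p hp hu hadj hadj' hcD hc'D hne
      (mem_Dfin.mp hu1) (mem_Dfin.mp hu2)
  · intro h
    obtain ⟨c, hc, hvc⟩ := Finset.mem_biUnion.mp h
    obtain ⟨hadj, hcD⟩ := mem_childFin.mp hc
    exact not_root_mem_D_of_adj p hp hu hadj hcD (mem_Dfin.mp hvc)

lemma card_Dfin_child_lt (p : ∀ u : V, T.Walk r u)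
    (hp : ∀ u, (p u).IsPath) (hu : ∀ u (q : T.Walk r u), q.IsPath → q = p u)
    {v c : V} (hadj : T.Adj v c) (hcD : c ∈ D p v) :
    (Dfin p c).card < (Dfin p v).card := by
  apply Finset.card_lt_card
  rw [Finset.ssubset_iff_of_subset]
  · exact ⟨v, mem_Dfin.mpr (mem_D_self p v),
      fun h => not_root_mem_D_of_adj p hp hu hadj hcD (mem_Dfin.mp h)⟩
  · intro u h
    exact mem_Dfin.mpr (D_trans p hp hu (mem_Dfin.mp h) hcD)


variable {m : ℝ}

/-- floor of subtree size over `m`. -/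
noncomputable def ff (p : ∀ u : V, T.Walk r u) (m : ℝ) (v : V) : ℕ :=
  ⌊((Dfin p v).card : ℝ) / m⌋₊

lemma sum_ff_le_real (p : ∀ u : V, T.Walk r u)
    (hp : ∀ u, (p u).IsPath) (hu : ∀ u (q : T.Walk r u), q.IsPath → q = p u)
    (hm : 0 < m) (v : V) :
    (∑ c ∈ childFin p v, (ff p m c : ℝ)) ≤ (((Dfin p v).card : ℝ) - 1) / m := by
  have h1 : ∀ c ∈ childFin p v, (ff p m c : ℝ) ≤ ((Dfin p c).card : ℝ) / m := fun c _ =>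
    Nat.floor_le (div_nonneg (Nat.cast_nonneg _) hm.le)
  calc ∑ c ∈ childFin p v, (ff p m c : ℝ)
      ≤ ∑ c ∈ childFin p v, ((Dfin p c).card : ℝ) / m := Finset.sum_le_sum h1
    _ = (∑ c ∈ childFin p v, ((Dfin p c).card : ℝ)) / m := by rw [← Finset.sum_div]
    _ = (((Dfin p v).card : ℝ) - 1) / m := by
        rw [card_Dfin p hp hu v]
        push_cast
        ring_nf

lemma sum_ff_le (p : ∀ u : V, T.Walk r u)
    (hp : ∀ u, (p u).IsPath) (hu : ∀ u (q : T.Walk r u), q.IsPath → q = p u)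
    (hm : 0 < m) (v : V) :
    ∑ c ∈ childFin p v, ff p m c ≤ ff p m v := by
  apply Nat.le_floor
  push_cast
  calc (∑ c ∈ childFin p v, (ff p m c : ℝ))
      ≤ (((Dfin p v).card : ℝ) - 1) / m := sum_ff_le_real p hp hu hm v
    _ ≤ ((Dfin p v).card : ℝ) / m := by
        gcongr
        linarith

/-- the condition defining the seed set (besides the root). -/
def seedCond (p : ∀ u : V, T.Walk r u) (m : ℝ) (v : V) : Prop :=
  ∑ c ∈ childFin p v, ff p m c < ff p m v

/-- vertices in the subtree of `v` satisfying the seed condition. -/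
noncomputable def condFin (p : ∀ u : V, T.Walk r u) (m : ℝ) (v : V) : Finset V :=
  (Set.toFinite {w | w ∈ D p v ∧ seedCond p m w}).toFinset

lemma mem_condFin {p : ∀ u : V, T.Walk r u} {v w : V} :
    w ∈ condFin p m v ↔ w ∈ D p v ∧ seedCond p m w :=
  Set.Finite.mem_toFinset _

lemma count_cond (p : ∀ u : V, T.Walk r u)
    (hp : ∀ u, (p u).IsPath) (hu : ∀ u (q : T.Walk r u), q.IsPath → q = p u)
    (hm : 0 < m) :
    ∀ (n : ℕ) (v : V), (Dfin p v).card ≤ n → (condFin p m v).card ≤ ff p m v := by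
  intro n
  induction n with
  | zero =>
    intro v hv
    exact absurd (Finset.card_pos.mpr ⟨v, mem_Dfin.mpr (mem_D_self p v)⟩) (by omega)
  | succ n ih =>
    intro v hv
    set B := (childFin p v).biUnion (condFin p m) with hB
    have hcardB : B.card ≤ ∑ c ∈ childFin p v, ff p m c := by
      calc B.card ≤ ∑ c ∈ childFin p v, (condFin p m c).card := Finset.card_biUnion_le
        _ ≤ ∑ c ∈ childFin p v, ff p m c := by
            apply Finset.sum_le_sum
            intro c hc
            obtain ⟨hadj, hcD⟩ := mem_childFin.mp hc
            exact ih c (by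
              have := card_Dfin_child_lt p hp hu hadj hcD
              omega)
    have hsub : ∀ w ∈ condFin p m v, w = v ∨ w ∈ B := by
      intro w hw
      obtain ⟨hwD, hwc⟩ := mem_condFin.mp hw
      by_cases hne : w = v
      · exact Or.inl hne
      · obtain ⟨c, hadj, hcD, hwc'⟩ := exists_child p hp hu hwD hne
        exact Or.inr (Finset.mem_biUnion.mpr
          ⟨c, mem_childFin.mpr ⟨hadj, hcD⟩, mem_condFin.mpr ⟨hwc', hwc⟩⟩)
    by_cases hcv : seedCond p m v
    · have : condFin p m v ⊆ insert v B := fun w hw => by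
        rcases hsub w hw with h | h
        · exact Finset.mem_insert.mpr (Or.inl h)
        · exact Finset.mem_insert.mpr (Or.inr h)
      calc (condFin p m v).card ≤ (insert v B).card := Finset.card_le_card this
        _ ≤ B.card + 1 := Finset.card_insert_le _ _
        _ ≤ (∑ c ∈ childFin p v, ff p m c) + 1 := by omega
        _ ≤ ff p m v := hcv
    · have : condFin p m v ⊆ B := fun w hw => by
        rcases hsub w hw with h | h
        · exact absurd (mem_condFin.mp hw).2 (h ▸ hcv)
        · exact h
      calc (condFin p m v).card ≤ B.card := Finset.card_le_card this
        _ ≤ ∑ c ∈ childFin p v, ff p m c := hcardB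
        _ ≤ ff p m v := sum_ff_le p hp hu hm v


/-- vertices of the subtree of `v` reachable from `v` in the graph induced on `W`. -/
def Rset (p : ∀ u : V, T.Walk r u) (W : Set V) (v : V) : Set V :=
  {u | u ∈ D p v ∧ ∃ (hv : v ∈ W) (hw : u ∈ W),
    (T.induce W).Reachable ⟨v, hv⟩ ⟨u, hw⟩}

noncomputable def Rfin (p : ∀ u : V, T.Walk r u) (W : Set V) (v : V) : Finset V :=
  (Set.toFinite (Rset p W v)).toFinset

lemma mem_Rfin {p : ∀ u : V, T.Walk r u} {W : Set V} {v u : V} :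
    u ∈ Rfin p W v ↔ u ∈ Rset p W v :=
  Set.Finite.mem_toFinset _

lemma Rfin_bound (p : ∀ u : V, T.Walk r u)
    (hp : ∀ u, (p u).IsPath) (hu : ∀ u (q : T.Walk r u), q.IsPath → q = p u)
    (hm : 0 < m) (W : Set V)
    (hW : ∀ v ∈ W, ∑ c ∈ childFin p v, ff p m c = ff p m v) :
    ∀ (n : ℕ) (v : V), (Dfin p v).card ≤ n → v ∈ W →
      ((Rfin p W v).card : ℝ) ≤ ((Dfin p v).card : ℝ) - m * (ff p m v) := by
  intro n
  induction n with
  | zero =>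
    intro v hv _
    exact absurd (Finset.card_pos.mpr ⟨v, mem_Dfin.mpr (mem_D_self p v)⟩) (by omega)
  | succ n ih =>
    intro v hv hvW
    set cW : Finset V := (Set.toFinite {c | c ∈ childFin p v ∧ c ∈ W}).toFinset with hcW
    have hmemcW : ∀ {c}, c ∈ cW ↔ c ∈ childFin p v ∧ c ∈ W := fun {c} =>
      Set.Finite.mem_toFinset _
    -- key subset claim
    have hsub : Rfin p W v ⊆ insert v (cW.biUnion (Rfin p W)) := by
      intro u hu'
      obtain ⟨huD, hv', hu'', hreach⟩ := mem_Rfin.mp hu'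
      by_cases hne : u = v
      · exact Finset.mem_insert.mpr (Or.inl hne)
      · obtain ⟨c, hadj, hcD, hucD⟩ := exists_child p hp hu huD hne
        have hvnc : v ∉ D p c := not_root_mem_D_of_adj p hp hu hadj hcD
        obtain ⟨q⟩ := hreach
        have hreach : (T.induce W).Reachable ⟨v, hv'⟩ ⟨u, hu''⟩ := ⟨q⟩
        have hcsup : c ∈ (q.map (SimpleGraph.Embedding.induce W).toHom : T.Walk v u).support :=
          walk_through p hu hvnc hucD _
        rw [Walk.support_map] at hcsup
        obtain ⟨x, hxq, hxc⟩ := List.mem_map.mp hcsup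
        have hxc' : (x : V) = c := hxc
        have hcW' : c ∈ W := hxc' ▸ x.2
        have hreach2 : (T.induce W).Reachable ⟨v, hv'⟩ x := ⟨q.takeUntil x hxq⟩
        have hreach3 : (T.induce W).Reachable ⟨c, hcW'⟩ ⟨u, hu''⟩ := by
          have hx : x = (⟨c, hcW'⟩ : W) := Subtype.ext hxc'
          exact (hx ▸ hreach2).symm.trans hreach
        refine Finset.mem_insert.mpr (Or.inr (Finset.mem_biUnion.mpr
          ⟨c, hmemcW.mpr ⟨mem_childFin.mpr ⟨hadj, hcD⟩, hcW'⟩,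
            mem_Rfin.mpr ⟨hucD, hcW', hu'', hreach3⟩⟩))
    have hterm_nonneg : ∀ c ∈ childFin p v,
        (0:ℝ) ≤ ((Dfin p c).card : ℝ) - m * (ff p m c) := by
      intro c _
      have h1 : (ff p m c : ℝ) ≤ ((Dfin p c).card : ℝ) / m :=
        Nat.floor_le (div_nonneg (Nat.cast_nonneg _) hm.le)
      have h2 : m * (ff p m c : ℝ) ≤ m * (((Dfin p c).card : ℝ) / m) := by
        exact mul_le_mul_of_nonneg_left h1 hm.le
      rw [mul_div_cancel₀ _ hm.ne'] at h2
      linarith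
    have hIH : ∀ c ∈ cW, ((Rfin p W c).card : ℝ)
        ≤ ((Dfin p c).card : ℝ) - m * (ff p m c) := by
      intro c hc
      obtain ⟨hc1, hc2⟩ := hmemcW.mp hc
      obtain ⟨hadj, hcD⟩ := mem_childFin.mp hc1
      refine ih c ?_ hc2
      have := card_Dfin_child_lt p hp hu hadj hcD
      omega
    have hcWsub : cW ⊆ childFin p v := fun c hc => (hmemcW.mp hc).1
    calc ((Rfin p W v).card : ℝ)
        ≤ ((insert v (cW.biUnion (Rfin p W))).card : ℝ) := by
          exact_mod_cast Finset.card_le_card hsub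
      _ ≤ (cW.biUnion (Rfin p W)).card + 1 := by
          exact_mod_cast Finset.card_insert_le _ _
      _ ≤ (∑ c ∈ cW, ((Rfin p W c).card : ℝ)) + 1 := by
          have := Finset.card_biUnion_le (s := cW) (t := Rfin p W)
          have h' : ((cW.biUnion (Rfin p W)).card : ℝ)
              ≤ ((∑ c ∈ cW, (Rfin p W c).card : ℕ) : ℝ) := by exact_mod_cast this
          push_cast at h'
          linarith
      _ ≤ (∑ c ∈ cW, (((Dfin p c).card : ℝ) - m * (ff p m c))) + 1 :=
          add_le_add_left (Finset.sum_le_sum hIH) 1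
      _ ≤ (∑ c ∈ childFin p v, (((Dfin p c).card : ℝ) - m * (ff p m c))) + 1 := by
          apply add_le_add_left
          exact Finset.sum_le_sum_of_subset_of_nonneg hcWsub
            (fun c hc _ => hterm_nonneg c hc)
      _ = ((Dfin p v).card : ℝ) - m * (ff p m v) := by
          rw [Finset.sum_sub_distrib, ← Finset.mul_sum]
          have h1 : ((Dfin p v).card : ℝ)
              = 1 + ∑ c ∈ childFin p v, ((Dfin p c).card : ℝ) := by
            rw [card_Dfin p hp hu v]; push_cast; ring
          have h2 : (∑ c ∈ childFin p v, (ff p m c : ℝ)) = (ff p m v : ℝ) := by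
            exact_mod_cast congrArg (Nat.cast (R := ℝ)) (hW v hvW)
          rw [h1, h2]
          ring

lemma exists_top (p : ∀ u : V, T.Walk r u)
    (hp : ∀ u, (p u).IsPath) (hu : ∀ u (q : T.Walk r u), q.IsPath → q = p u)
    (W : Set V) {a b : ↥W} (q : (T.induce W).Walk a b) :
    ∃ x : ↥W, (T.induce W).Reachable a x ∧ (↑a : V) ∈ D p ↑x ∧ (↑b : V) ∈ D p ↑x := by
  induction q with
  | nil => exact ⟨_, Reachable.refl _, mem_D_self p _, mem_D_self p _⟩
  | @cons a a' b h q ih =>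
    obtain ⟨x, hreach, ha', hb⟩ := ih
    have hTadj : T.Adj ↑a ↑a' := h
    by_cases hA : (↑a : V) ∈ D p ↑x
    · exact ⟨x, (h.reachable).trans hreach, hA, hb⟩
    · have hax : (↑a' : V) = ↑x := adj_mem_D p hu ha' hTadj hA
      rcases adj_dichotomy p hp hu hTadj with hd | hd
      · rw [hax] at hd
        exact absurd hd hA
      · refine ⟨a, Reachable.refl _, mem_D_self p _, ?_⟩
        rw [← hax] at hb
        exact D_trans p hp hu hb hd

end fin

end SeedDecomp



open SeedDecomp in
/-- Let `β ∈ (0,1)` and let `T` be a tree on `t+1` vertices rooted at `r`. Then there is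
a set `S` of vertices containing the root, with `|S| < 1/β + 2`, such that every
connected component of `T − S` has at most `β·t` vertices. -/
theorem exists_seed_decomposition {V : Type*} [Fintype V]
    (T : SimpleGraph V) (t : ℕ) (hT : T.IsTree)
    (hcard : Fintype.card V = t + 1) (r : V)
    (β : ℝ) (hβ0 : 0 < β) (hβ1 : β < 1) :
    ∃ S : Set V, r ∈ S ∧ (S.ncard : ℝ) < 1 / β + 2 ∧
      ∀ c : (T.induce {v | v ∉ S}).ConnectedComponent,
        (c.supp.ncard : ℝ) ≤ β * t := by
  classical
  have hβinv : (0:ℝ) < 1/β := by positivity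
  rcases Nat.eq_zero_or_pos t with rfl | ht
  · refine ⟨Set.univ, Set.mem_univ r, ?_, ?_⟩
    · rw [Set.ncard_univ, Nat.card_eq_fintype_card, hcard]
      push_cast
      linarith
    · intro c
      obtain ⟨⟨v, hv⟩, _⟩ := c.exists_rep
      simp at hv
  · have htR : (0:ℝ) < t := by exact_mod_cast ht
    set p : ∀ u, T.Walk r u := fun u => (hT.existsUnique_path r u).choose with hpdef
    have hp : ∀ u, (p u).IsPath := fun u => (hT.existsUnique_path r u).choose_spec.1
    have hu : ∀ u (q : T.Walk r u), q.IsPath → q = p u := fun u q hq =>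
      (hT.existsUnique_path r u).choose_spec.2 q hq
    set m : ℝ := β * t with hmdef
    have hm : 0 < m := mul_pos hβ0 htR
    set S : Set V := {v | v = r ∨ seedCond p m v} with hSdef
    have hrS : r ∈ S := Or.inl rfl
    have hcardDr : (Dfin p r).card = t + 1 := by
      have hDr : Dfin p r = Finset.univ :=
        Finset.eq_univ_iff_forall.mpr fun u => mem_Dfin.mpr (mem_D_root p u)
      rw [hDr, Finset.card_univ, hcard]
    refine ⟨S, hrS, ?_, ?_⟩
    · -- size bound
      have hcount : ((condFin p m r).erase r).card ≤ ∑ c ∈ childFin p r, ff p m c := by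
        have hsub2 : (condFin p m r).erase r ⊆ (childFin p r).biUnion (condFin p m) := by
          intro w hw
          obtain ⟨hne, hw'⟩ := Finset.mem_erase.mp hw
          obtain ⟨hwD, hwc⟩ := mem_condFin.mp hw'
          obtain ⟨c, hadj, hcD, hwc'⟩ := exists_child p hp hu hwD hne
          exact Finset.mem_biUnion.mpr
            ⟨c, mem_childFin.mpr ⟨hadj, hcD⟩, mem_condFin.mpr ⟨hwc', hwc⟩⟩
        calc ((condFin p m r).erase r).card
            ≤ ((childFin p r).biUnion (condFin p m)).card := Finset.card_le_card hsub2
          _ ≤ ∑ c ∈ childFin p r, (condFin p m c).card := Finset.card_biUnion_le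
          _ ≤ ∑ c ∈ childFin p r, ff p m c := Finset.sum_le_sum fun c _ =>
              count_cond p hp hu hm ((Dfin p c).card) c le_rfl
      have hSsub : S ⊆ ↑(insert r ((condFin p m r).erase r)) := by
        intro v hv
        rw [Finset.coe_insert, Set.mem_insert_iff]
        rcases hv with rfl | hv
        · exact Or.inl rfl
        · by_cases hvr : v = r
          · exact Or.inl hvr
          · exact Or.inr (Finset.mem_coe.mpr (Finset.mem_erase.mpr
              ⟨hvr, mem_condFin.mpr ⟨mem_D_root p v, hv⟩⟩))
      have hS1 : (S.ncard : ℝ) ≤ 1 + ((condFin p m r).erase r).card := by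
        have h1 : S.ncard ≤ (insert r ((condFin p m r).erase r)).card := by
          calc S.ncard ≤ (↑(insert r ((condFin p m r).erase r)) : Set V).ncard :=
                Set.ncard_le_ncard hSsub (Set.toFinite _)
            _ = (insert r ((condFin p m r).erase r)).card := Set.ncard_coe_finset _
        have h2 := Finset.card_insert_le r ((condFin p m r).erase r)
        have := h1.trans h2
        push_cast
        exact_mod_cast by linarith [this]
      have hS2 : (((condFin p m r).erase r).card : ℝ) ≤ 1/β := by
        have h3 : ((∑ c ∈ childFin p r, ff p m c : ℕ) : ℝ)
            ≤ (((Dfin p r).card : ℝ) - 1) / m := by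
          push_cast
          exact sum_ff_le_real p hp hu hm r
        have h4 : (((Dfin p r).card : ℝ) - 1) / m = 1/β := by
          rw [hcardDr, hmdef]
          push_cast
          field_simp
          ring
        calc (((condFin p m r).erase r).card : ℝ)
            ≤ ((∑ c ∈ childFin p r, ff p m c : ℕ) : ℝ) := by exact_mod_cast hcount
          _ ≤ 1/β := by rw [← h4]; exact h3
      linarith
    · -- components bound
      set W : Set V := {v | v ∉ S} with hWdef
      intro comp
      have hWprop : ∀ v ∈ W, ∑ c ∈ childFin p v, ff p m c = ff p m v := by
        intro v hv
        have hv' : ¬(v = r ∨ seedCond p m v) := hv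
        push_neg at hv'
        exact le_antisymm (sum_ff_le p hp hu hm v) (not_lt.mp hv'.2)
      obtain ⟨a, ha⟩ := comp.exists_rep
      set I : Set V := Subtype.val '' comp.supp with hIdef
      have hIne : I.Nonempty := ⟨↑a, a, (SimpleGraph.ConnectedComponent.mem_supp_iff comp ↑a).mpr ha, rfl⟩
      obtain ⟨v0, hv0I, hmax⟩ := Set.Finite.exists_maximalFor
        (fun v => (Dfin p v).card) I (Set.toFinite I) hIne
      obtain ⟨vt, hvt, rfl⟩ := hv0I
      have hsubR : I ⊆ Rset p W ↑vt := by
        rintro u ⟨ut, hut, rfl⟩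
        have hreach : (T.induce W).Reachable vt ut := by
          have hvt' := (SimpleGraph.ConnectedComponent.mem_supp_iff comp vt).mp hvt
          have hut' := (SimpleGraph.ConnectedComponent.mem_supp_iff comp ut).mp hut
          exact SimpleGraph.ConnectedComponent.exact (hvt'.trans hut'.symm)
        obtain ⟨q⟩ := hreach
        obtain ⟨x, hxr, hvtD, hutD⟩ := exists_top p hp hu W q
        have hxsupp : x ∈ comp.supp := by
          have hvt' := (SimpleGraph.ConnectedComponent.mem_supp_iff comp vt).mp hvt
          refine (SimpleGraph.ConnectedComponent.mem_supp_iff comp x).mpr ?_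
          rw [← hvt']
          exact SimpleGraph.ConnectedComponent.sound hxr.symm
        have hxI : (↑x : V) ∈ I := ⟨x, hxsupp, rfl⟩
        have hsub2 : Dfin p ↑vt ⊆ Dfin p ↑x := fun w hw =>
          mem_Dfin.mpr (D_trans p hp hu (mem_Dfin.mp hw) hvtD)
        have hcardeq := le_antisymm (Finset.card_le_card hsub2) (hmax hxI (Finset.card_le_card hsub2))
        have hDeq : Dfin p (↑vt : V) = Dfin p ↑x :=
          Finset.eq_of_subset_of_card_le hsub2 (le_of_eq hcardeq.symm)
        have hxvt : (↑x : V) = ↑vt := by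
          apply D_antisymm p hp hu ?_ hvtD
          have hxx : (↑x : V) ∈ Dfin p ↑x := mem_Dfin.mpr (mem_D_self p _)
          rw [← hDeq] at hxx
          exact mem_Dfin.mp hxx
        refine ⟨?_, vt.2, ut.2, ?_⟩
        · rw [← hxvt]
          exact hutD
        · exact ⟨q⟩
      have hvtW : (↑vt : V) ∈ W := vt.2
      have h3 := Rfin_bound p hp hu hm W hWprop ((Dfin p (↑vt:V)).card) ↑vt le_rfl hvtW
      have h1 : comp.supp.ncard = I.ncard :=
        (Set.ncard_image_of_injective _ Subtype.val_injective).symm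
      have h2 : (I.ncard : ℝ) ≤ ((Rfin p W ↑vt).card : ℝ) := by
        have hsub3 : I ⊆ ↑(Rfin p W ↑vt) := fun u hu' => by
          rw [Finset.mem_coe, mem_Rfin]
          exact hsubR hu'
        exact_mod_cast calc I.ncard ≤ (↑(Rfin p W (↑vt:V)) : Set V).ncard :=
              Set.ncard_le_ncard hsub3 (Set.toFinite _)
          _ = (Rfin p W (↑vt:V)).card := Set.ncard_coe_finset _
      have hlt : ((Dfin p (↑vt:V)).card : ℝ) - m * ff p m ↑vt ≤ m := by
        have h5 := Nat.lt_floor_add_one (((Dfin p (↑vt:V)).card : ℝ)/m)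
        have h6 : ((Dfin p (↑vt:V)).card:ℝ) = m * (((Dfin p (↑vt:V)).card:ℝ)/m) := by
          field_simp
        have h7 : m * (((Dfin p (↑vt:V)).card:ℝ)/m)
            < m * ((ff p m (↑vt:V) : ℝ) + 1) := by
          apply mul_lt_mul_of_pos_left _ hm
          exact_mod_cast h5
        nlinarith
      calc (comp.supp.ncard : ℝ) = (I.ncard : ℝ) := by rw [h1]
        _ ≤ ((Rfin p W ↑vt).card : ℝ) := h2
        _ ≤ ((Dfin p (↑vt:V)).card : ℝ) - m * ff p m ↑vt := h3
        _ ≤ m := hlt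
        _ = β * t := hmdef
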